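/- Fix ε > 0. If the edges of K_n are independently uniformly colored with r = r(n) ≥ n^{4+ε} colors, then for every k ≤ n, the probability that there exists a heterochromatic k-clique tends to 1 as n → ∞. -/

import Mathlib

open Finset Filter

open scoped Classical

noncomputable section

/-- A finset of edges of `K_n` forms a matching: all edges are proper (non-loop)
and no two distinct edges share a vertex. -/
def IsMatching {n : ℕ} (M : Finset (Sym2 (Fin n))) : Prop :=
  (∀ e ∈ M, ¬ e.IsDiag) ∧
    ∀ e ∈ M, ∀ f ∈ M, e ≠ f → ∀ v : Fin n, v ∈ e → v ∉ f

/-- The finset of all `k`-matchings of `K_n`. -/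
def matchings (n k : ℕ) : Finset (Finset (Sym2 (Fin n))) :=
  Finset.univ.filter fun M => M.card = k ∧ IsMatching M

/-- All edges in `M` receive the same color under the coloring `c`. -/
def Monochromatic {n r : ℕ} (c : Sym2 (Fin n) → Fin r)
    (M : Finset (Sym2 (Fin n))) : Prop :=
  ∃ col, ∀ e ∈ M, c e = col

/-- Distinct edges in `M` receive pairwise distinct colors under `c`. -/
def Heterochromatic {n r : ℕ} (c : Sym2 (Fin n) → Fin r)
    (M : Finset (Sym2 (Fin n))) : Prop :=
  ∀ e ∈ M, ∀ f ∈ M, e ≠ f → c e ≠ c f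

/-- Probability of an event `P` under a uniformly random `r`-coloring of the
edges of `K_n`. -/
def Pr (n r : ℕ) (P : (Sym2 (Fin n) → Fin r) → Prop) : ℚ :=
  ((Finset.univ.filter P).card : ℚ) / (Fintype.card (Sym2 (Fin n) → Fin r) : ℚ)

/-- Expected number of monochromatic `k`-matchings in a uniformly random
`r`-coloring of the edges of `K_n`. -/
def EXmono (n r k : ℕ) : ℚ :=
  (∑ c : Sym2 (Fin n) → Fin r,
      (((matchings n k).filter fun M => Monochromatic c M).card : ℚ)) /
    (Fintype.card (Sym2 (Fin n) → Fin r) : ℚ)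

/-- Expected number of heterochromatic `k`-matchings in a uniformly random
`r`-coloring of the edges of `K_n`. -/
def EYhet (n r k : ℕ) : ℚ :=
  (∑ c : Sym2 (Fin n) → Fin r,
      (((matchings n k).filter fun M => Heterochromatic c M).card : ℚ)) /
    (Fintype.card (Sym2 (Fin n) → Fin r) : ℚ)

/-- The vertex set `S` spans a monochromatic clique: all edges between distinct
vertices of `S` have one common color. -/
def MonoClique {n r : ℕ} (c : Sym2 (Fin n) → Fin r) (S : Finset (Fin n)) : Prop :=
  ∃ col, ∀ u ∈ S, ∀ v ∈ S, u ≠ v → c s(u, v) = col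

/-- The vertex set `S` spans a heterochromatic clique: distinct edges between
vertices of `S` have pairwise distinct colors. -/
def HeteroClique {n r : ℕ} (c : Sym2 (Fin n) → Fin r) (S : Finset (Fin n)) : Prop :=
  ∀ u ∈ S, ∀ v ∈ S, ∀ w ∈ S, ∀ x ∈ S,
    u ≠ v → w ≠ x → s(u, v) ≠ s(w, x) → c s(u, v) ≠ c s(w, x)

/-- `T` is the edge set of a tree with vertex set `S`: it consists of
`S.card - 1` proper edges inside `S` and connects all vertices of `S`
(a connected graph on `|S|` vertices with `|S| - 1` edges is a tree). -/
def IsTreeOn {n : ℕ} (S : Finset (Fin n)) (T : Finset (Sym2 (Fin n))) : Prop :=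
  T.card + 1 = S.card ∧ (∀ e ∈ T, ¬ e.IsDiag) ∧
    (∀ e ∈ T, ∀ v : Fin n, v ∈ e → v ∈ S) ∧
    ∀ u ∈ S, ∀ v ∈ S,
      (SimpleGraph.fromEdgeSet (↑T : Set (Sym2 (Fin n)))).Reachable u v

/-- Bijection used for counting colorings with `c e = c f`. -/
def updEquiv {α : Type*} [DecidableEq α] {r : ℕ} {e f : α} (hef : e ≠ f) :
    ({c : α → Fin r // c e = c f} × Fin r) ≃ (α → Fin r) where
  toFun p := Function.update p.1.1 f p.2
  invFun c := (⟨Function.update c f (c e), by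
      simp [Function.update_of_ne hef]⟩, c f)
  left_inv := by
    rintro ⟨⟨c, h⟩, x⟩
    have h1 : Function.update c f x e = c e := Function.update_of_ne hef _ _
    ext1
    · ext1
      simp only [h1, Function.update_idem]
      rw [h, Function.update_eq_self]
    · simp
  right_inv := by
    intro c
    simp only [Function.update_idem]
    rw [Function.update_eq_self]

lemma filter_eq_card_mul {α : Type*} [Fintype α] [DecidableEq α] (r : ℕ) {e f : α}
    (hef : e ≠ f) :
    (Finset.univ.filter fun c : α → Fin r => c e = c f).card * r
      = Fintype.card (α → Fin r) := by
  calc (Finset.univ.filter fun c : α → Fin r => c e = c f).card * r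
      = Fintype.card {c : α → Fin r // c e = c f} * Fintype.card (Fin r) := by
        rw [Fintype.card_subtype, Fintype.card_fin]
    _ = Fintype.card ({c : α → Fin r // c e = c f} × Fin r) := (Fintype.card_prod _ _).symm
    _ = Fintype.card (α → Fin r) := Fintype.card_congr (updEquiv hef)

lemma bad_card_mul_le (n r : ℕ) :
    (@Finset.filter _ (fun c : Sym2 (Fin n) → Fin r => ¬ Function.Injective c)
        (fun c => Classical.propDecidable _) Finset.univ).card * r
      ≤ (Fintype.card (Sym2 (Fin n)))^2 * Fintype.card (Sym2 (Fin n) → Fin r) := by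
  set α := Sym2 (Fin n)
  set pairs : Finset (α × α) := Finset.univ.filter fun p => p.1 ≠ p.2 with hpairs
  have hsub : (@Finset.filter _ (fun c : α → Fin r => ¬ Function.Injective c)
      (fun c => Classical.propDecidable _) Finset.univ)
      ⊆ pairs.biUnion (fun p => Finset.univ.filter fun c : α → Fin r => c p.1 = c p.2) := by
    intro c hc
    simp only [mem_filter, mem_univ, true_and] at hc
    obtain ⟨a, b, hab, hne⟩ := Function.not_injective_iff.mp hc
    refine Finset.mem_biUnion.mpr ⟨(a, b), ?_, ?_⟩ <;> simp [hpairs, hne, hab]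
  calc (@Finset.filter _ (fun c : α → Fin r => ¬ Function.Injective c)
      (fun c => Classical.propDecidable _) Finset.univ).card * r
      ≤ (pairs.biUnion fun p =>
          Finset.univ.filter fun c : α → Fin r => c p.1 = c p.2).card * r :=
        Nat.mul_le_mul_right _ (Finset.card_le_card hsub)
    _ ≤ (∑ p ∈ pairs,
          (Finset.univ.filter fun c : α → Fin r => c p.1 = c p.2).card) * r :=
        Nat.mul_le_mul_right _ Finset.card_biUnion_le
    _ = ∑ p ∈ pairs,
          ((Finset.univ.filter fun c : α → Fin r => c p.1 = c p.2).card * r) :=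
        Finset.sum_mul _ _ _
    _ = ∑ p ∈ pairs, Fintype.card (α → Fin r) := by
        refine Finset.sum_congr rfl fun p hp => ?_
        have : p.1 ≠ p.2 := by simpa [hpairs] using hp
        exact filter_eq_card_mul r this
    _ = pairs.card * Fintype.card (α → Fin r) := by rw [Finset.sum_const, smul_eq_mul]
    _ ≤ (Fintype.card (α × α)) * Fintype.card (α → Fin r) :=
        Nat.mul_le_mul_right _ (by
          calc pairs.card ≤ (Finset.univ : Finset (α × α)).card :=
                Finset.card_le_card (Finset.filter_subset _ _)
            _ = Fintype.card (α × α) := Finset.card_univ)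
    _ = (Fintype.card α)^2 * Fintype.card (α → Fin r) := by
        rw [Fintype.card_prod, sq]

lemma sym2_card_le (n : ℕ) : Fintype.card (Sym2 (Fin n)) ≤ n ^ 2 := by
  have hs : Function.Surjective (fun p : Fin n × Fin n => Sym2.mk p.1 p.2) := by
    intro z; induction z using Sym2.ind with | _ x y => exact ⟨(x, y), rfl⟩
  calc Fintype.card (Sym2 (Fin n)) ≤ Fintype.card (Fin n × Fin n) :=
        Fintype.card_le_of_surjective _ hs
    _ = n ^ 2 := by simp [sq]

lemma Pr_le_one (n r : ℕ) (P : (Sym2 (Fin n) → Fin r) → Prop) : Pr n r P ≤ 1 := by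
  unfold Pr
  apply div_le_one_of_le₀
  · exact_mod_cast (Finset.card_filter_le _ _).trans_eq Finset.card_univ
  · positivity

lemma Pr_mono {n r : ℕ} {P Q : (Sym2 (Fin n) → Fin r) → Prop}
    (h : ∀ c, P c → Q c) : Pr n r P ≤ Pr n r Q := by
  unfold Pr
  gcongr
  exact h _

lemma totpos (n r : ℕ) (hr : 0 < r) :
    0 < ((Fintype.card (Sym2 (Fin n) → Fin r) : ℚ)) := by
  have : 0 < Fintype.card (Sym2 (Fin n) → Fin r) := by
    rw [Fintype.card_fun, Fintype.card_fin]; exact pow_pos hr _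
  exact_mod_cast this

lemma Pr_add_not (n r : ℕ) (hr : 0 < r) (P : (Sym2 (Fin n) → Fin r) → Prop) :
    Pr n r P + Pr n r (fun c => ¬ P c) = 1 := by
  unfold Pr
  rw [← add_div, div_eq_one_iff_eq (ne_of_gt (totpos n r hr))]
  have h := @Finset.card_filter_add_card_filter_not _
    (Finset.univ : Finset (Sym2 (Fin n) → Fin r)) P
    (fun c => Classical.propDecidable _) (fun c => Classical.propDecidable _)
  rw [Finset.card_univ] at h
  exact_mod_cast h

lemma Pr_not_inj_le (n r : ℕ) (hr : 0 < r) :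
    Pr n r (fun c => ¬ Function.Injective c)
      ≤ ((Fintype.card (Sym2 (Fin n)) : ℚ))^2 / r := by
  unfold Pr
  rw [div_le_div_iff₀ (totpos n r hr) (by exact_mod_cast hr)]
  exact_mod_cast bad_card_mul_le n r

lemma Pr_inj_ge (n r : ℕ) (hr : 0 < r) :
    1 - ((Fintype.card (Sym2 (Fin n)) : ℚ))^2 / r
      ≤ Pr n r fun c => Function.Injective c := by
  have h1 := Pr_add_not n r hr (fun c => Function.Injective c)
  have h2 := Pr_not_inj_le n r hr
  linarith

/-- if `r(n) ≥ n^(4+ε)`, then for every `k(n) ≤ n` the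
probability that a heterochromatic `k(n)`-clique exists tends to `1`. -/
theorem hetero_clique_exists (ε : ℝ) (hε : 0 < ε) (r : ℕ → ℕ)
    (hr : ∀ᶠ n : ℕ in atTop, (n : ℝ) ^ ((4 : ℝ) + ε) ≤ (r n : ℝ))
    (k : ℕ → ℕ) (hk : ∀ n, k n ≤ n) :
    Tendsto
      (fun n =>
        ((Pr n (r n)
            (fun c => ∃ S : Finset (Fin n), S.card = k n ∧ HeteroClique c S) : ℚ) : ℝ))
      atTop (nhds 1) := by
  have h0 : Tendsto (fun n : ℕ => 1 - (n : ℝ) ^ (-ε)) atTop (nhds 1) := by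
    have h := (tendsto_rpow_neg_atTop hε).comp (tendsto_natCast_atTop_atTop (R := ℝ))
    simpa using tendsto_const_nhds.sub h
  refine tendsto_of_tendsto_of_tendsto_of_le_of_le' h0 tendsto_const_nhds ?_ ?_
  · filter_upwards [hr, eventually_ge_atTop 1] with n hrn hn1
    have hn1R : (1 : ℝ) ≤ (n : ℝ) := by exact_mod_cast hn1
    have hnpos : (0 : ℝ) < (n : ℝ) := by linarith
    have hpow1 : (1 : ℝ) ≤ (n : ℝ) ^ ((4 : ℝ) + ε) :=
      Real.one_le_rpow hn1R (by linarith)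
    have hrposR : (1 : ℝ) ≤ (r n : ℝ) := le_trans hpow1 hrn
    have hrpos0 : (0 : ℝ) < (r n : ℝ) := by linarith
    have hrn1 : 0 < r n := by exact_mod_cast hrpos0
    have hq := Pr_inj_ge n (r n) hrn1
    have hmono : Pr n (r n) (fun c => Function.Injective c)
        ≤ Pr n (r n) (fun c => ∃ S : Finset (Fin n), S.card = k n ∧ HeteroClique c S) := by
      refine Pr_mono fun c hc => ?_
      obtain ⟨S, _, hcard⟩ := Finset.exists_subset_card_eq
        (s := (Finset.univ : Finset (Fin n))) (n := k n) (by simpa using hk n)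
      exact ⟨S, hcard, fun u _ v _ w _ x _ _ _ hne h => hne (hc h)⟩
    have hcast := (Rat.cast_le (K := ℝ)).mpr (hq.trans hmono)
    push_cast at hcast
    have hN : ((Fintype.card (Sym2 (Fin n)) : ℝ)) ≤ (n : ℝ)^2 := by
      exact_mod_cast sym2_card_le n
    have hNn : (0 : ℝ) ≤ (Fintype.card (Sym2 (Fin n)) : ℝ) := by positivity
    have h1 : ((Fintype.card (Sym2 (Fin n)) : ℝ))^2 / (r n)
        ≤ ((n : ℝ)^2)^2 / (r n) := by gcongr
    have h2 : ((n : ℝ)^2)^2 / (r n) ≤ (n : ℝ) ^ ((4 : ℝ)) / (n : ℝ) ^ ((4 : ℝ) + ε) := by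
      have he : ((n : ℝ)^2)^2 = (n : ℝ) ^ ((4 : ℝ)) := by
        rw [← pow_mul, show (2*2 : ℕ) = 4 from rfl, ← Real.rpow_natCast (n : ℝ) 4]
        norm_num
      rw [he]
      have hp : (0 : ℝ) < (n : ℝ) ^ ((4 : ℝ) + ε) := Real.rpow_pos_of_pos hnpos _
      exact div_le_div_of_nonneg_left (Real.rpow_nonneg (le_of_lt hnpos) _) hp hrn
    have h3 : (n : ℝ) ^ ((4 : ℝ)) / (n : ℝ) ^ ((4 : ℝ) + ε) = (n : ℝ) ^ (-ε) := by
      rw [← Real.rpow_sub hnpos]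
      norm_num
    have hfin : ((Fintype.card (Sym2 (Fin n)) : ℝ))^2 / (r n) ≤ (n : ℝ) ^ (-ε) :=
      h1.trans (h2.trans_eq h3)
    linarith
  · filter_upwards with n
    exact_mod_cast Pr_le_one n (r n) _

end
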